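/- arXiv:1910.00633 — 6 statements merged into one kernel-verified Lean document; each statement's English description precedes it below -/
import Mathlib

section
/- Let S = {A, B, C, D} be a 4-point set in ℝᵈ determining exactly one distinct triangle T with pairwise distinct side lengths d₁, d₂, d₃ (scalene). Then, up to relabeling, AB = CD = d₁, AC = BD = d₂, and AD = BC = d₃; i.e., opposite pairs of edges are equal. -/
/-- `P3 a b c d e f` says `(a,b,c)` is a permutation of `(d,e,f)` componentwise. -/
def P3 (a b c d e f : ℝ) : Prop :=
  (a = d ∧ b = e ∧ c = f) ∨ (a = d ∧ b = f ∧ c = e) ∨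
  (a = e ∧ b = d ∧ c = f) ∨ (a = e ∧ b = f ∧ c = d) ∨
  (a = f ∧ b = d ∧ c = e) ∨ (a = f ∧ b = e ∧ c = d)

lemma P3_swap23 {a b c d e f : ℝ} (h : P3 a b c d e f) : P3 a c b d e f := by
  unfold P3 at *; tauto

lemma pair2 {b c d e : ℝ} (hde : d ≠ e) (k1 : d = b ∨ d = c) (k2 : e = b ∨ e = c) :
    (b = d ∧ c = e) ∨ (b = e ∧ c = d) := by
  rcases k1 with rfl | rfl <;> rcases k2 with rfl | rfl <;> tauto

lemma perm3 {a b c d₁ d₂ d₃ : ℝ} (h12 : d₁ ≠ d₂) (h13 : d₁ ≠ d₃) (h23 : d₂ ≠ d₃)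
    (h : ({a, b, c} : Multiset ℝ) = {d₁, d₂, d₃}) :
    P3 a b c d₁ d₂ d₃ := by
  have ha : a = d₁ ∨ a = d₂ ∨ a = d₃ := by
    have : a ∈ ({a, b, c} : Multiset ℝ) := by simp
    rw [h] at this; simpa using this
  have k1 : d₁ = a ∨ d₁ = b ∨ d₁ = c := by
    have : d₁ ∈ ({d₁, d₂, d₃} : Multiset ℝ) := by simp
    rw [← h] at this; simpa using this
  have k2 : d₂ = a ∨ d₂ = b ∨ d₂ = c := by
    have : d₂ ∈ ({d₁, d₂, d₃} : Multiset ℝ) := by simp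
    rw [← h] at this; simpa using this
  have k3 : d₃ = a ∨ d₃ = b ∨ d₃ = c := by
    have : d₃ ∈ ({d₁, d₂, d₃} : Multiset ℝ) := by simp
    rw [← h] at this; simpa using this
  rcases ha with ha1 | ha1 | ha1
  · have p := pair2 h23 (k2.resolve_left (fun hh => h12.symm (hh.trans ha1)))
      (k3.resolve_left (fun hh => h13.symm (hh.trans ha1)))
    rcases p with ⟨hb, hc⟩ | ⟨hb, hc⟩
    · exact Or.inl ⟨ha1, hb, hc⟩
    · exact Or.inr (Or.inl ⟨ha1, hb, hc⟩)
  · have p := pair2 h13 (k1.resolve_left (fun hh => h12 (hh.trans ha1)))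
      (k3.resolve_left (fun hh => h23.symm (hh.trans ha1)))
    rcases p with ⟨hb, hc⟩ | ⟨hb, hc⟩
    · exact Or.inr (Or.inr (Or.inl ⟨ha1, hb, hc⟩))
    · exact Or.inr (Or.inr (Or.inr (Or.inl ⟨ha1, hb, hc⟩)))
  · have p := pair2 h12 (k1.resolve_left (fun hh => h13 (hh.trans ha1)))
      (k2.resolve_left (fun hh => h23 (hh.trans ha1)))
    rcases p with ⟨hb, hc⟩ | ⟨hb, hc⟩
    · exact Or.inr (Or.inr (Or.inr (Or.inr (Or.inl ⟨ha1, hb, hc⟩))))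
    · exact Or.inr (Or.inr (Or.inr (Or.inr (Or.inr ⟨ha1, hb, hc⟩))))

lemma extractA {a b c x y : ℝ} (hab : a ≠ b) (hac : a ≠ c)
    (t : P3 a x y a b c) : (x = b ∧ y = c) ∨ (x = c ∧ y = b) := by
  unfold P3 at t; tauto

lemma extractB {a b c x y : ℝ} (hba : b ≠ a) (hbc : b ≠ c)
    (t : P3 b x y a b c) : (x = a ∧ y = c) ∨ (x = c ∧ y = a) := by
  unfold P3 at t; tauto

lemma extractC {a b c x y : ℝ} (hca : c ≠ a) (hcb : c ≠ b)
    (t : P3 c x y a b c) : (x = a ∧ y = b) ∨ (x = b ∧ y = a) := by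
  unfold P3 at t; tauto

lemma solve3 {d₁ d₂ d₃ x y z : ℝ} (h12 : d₁ ≠ d₂) (h13 : d₁ ≠ d₃) (h23 : d₂ ≠ d₃)
    (t1 : P3 d₁ x y d₁ d₂ d₃) (t2 : P3 d₂ x z d₁ d₂ d₃) (t3 : P3 d₃ y z d₁ d₂ d₃) :
    x = d₃ ∧ y = d₂ ∧ z = d₁ := by
  rcases extractA h12 h13 t1 with ⟨rfl, rfl⟩ | ⟨rfl, rfl⟩ <;>
    rcases extractB h12.symm h23 t2 with ⟨u, v⟩ | ⟨u, v⟩ <;>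
    rcases extractC h13.symm h23.symm t3 with ⟨w, w'⟩ | ⟨w, w'⟩ <;>
    refine ⟨?_, ?_, ?_⟩ <;> first
      | rfl
      | (exact absurd u h12.symm) | (exact absurd u h23)
      | (exact absurd w h13.symm) | (exact absurd w h23.symm)
      | (exact v) | (exact w')
      | tauto

set_option maxHeartbeats 1000000 in
/-- A 4-point set determining exactly one distinct scalene triangle with sides
d₁, d₂, d₃ has, up to relabeling, opposite pairs of edges equal:
AB = CD = d₁, AC = BD = d₂, AD = BC = d₃. -/
theorem four_points_scalene_opposite_edges
    (n : ℕ)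
    (A B C D : EuclideanSpace ℝ (Fin n))
    (hdistinct : ({A, B, C, D} : Set (EuclideanSpace ℝ (Fin n))).ncard = 4)
    (d₁ d₂ d₃ : ℝ) (h₁ : 0 < d₁) (h₂ : 0 < d₂) (h₃ : 0 < d₃)
    (h12 : d₁ ≠ d₂) (h13 : d₁ ≠ d₃) (h23 : d₂ ≠ d₃)
    (hT : ∀ p ∈ ({A, B, C, D} : Set (EuclideanSpace ℝ (Fin n))),
      ∀ q ∈ ({A, B, C, D} : Set (EuclideanSpace ℝ (Fin n))),
      ∀ r ∈ ({A, B, C, D} : Set (EuclideanSpace ℝ (Fin n))),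
      p ≠ q → p ≠ r → q ≠ r →
      ¬ Collinear ℝ ({p, q, r} : Set (EuclideanSpace ℝ (Fin n))) ∧
      ({dist p q, dist p r, dist q r} : Multiset ℝ) = {d₁, d₂, d₃}) :
    ∃ A' B' C' D' : EuclideanSpace ℝ (Fin n),
      ({A', B', C', D'} : Set (EuclideanSpace ℝ (Fin n))) = {A, B, C, D} ∧
      dist A' B' = d₁ ∧ dist C' D' = d₁ ∧
      dist A' C' = d₂ ∧ dist B' D' = d₂ ∧
      dist A' D' = d₃ ∧ dist B' C' = d₃ := by
  -- pairwise distinctness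
  have hle : ∀ x y z : EuclideanSpace ℝ (Fin n), ({x, y, z} : Set _).ncard ≤ 3 := by
    intro x y z
    refine le_trans (Set.ncard_insert_le _ _) ?_
    have h1 := Set.ncard_insert_le y ({z} : Set (EuclideanSpace ℝ (Fin n)))
    have h2 : ({z} : Set (EuclideanSpace ℝ (Fin n))).ncard = 1 := Set.ncard_singleton z
    omega
  have key : ∀ x y z : EuclideanSpace ℝ (Fin n),
      ({A, B, C, D} : Set _) ⊆ ({x, y, z} : Set _) → False := by
    intro x y z hsub
    have h1 : ({A, B, C, D} : Set (EuclideanSpace ℝ (Fin n))).ncard ≤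
        ({x, y, z} : Set (EuclideanSpace ℝ (Fin n))).ncard :=
      Set.ncard_le_ncard hsub (Set.toFinite _)
    have h2 := hle x y z
    omega
  have hAB : A ≠ B := fun h => key B C D (by
    intro t ht
    simp only [Set.mem_insert_iff, Set.mem_singleton_iff] at ht ⊢
    rcases ht with rfl | rfl | rfl | rfl <;> tauto)
  have hAC : A ≠ C := fun h => key A B D (by
    intro t ht
    simp only [Set.mem_insert_iff, Set.mem_singleton_iff] at ht ⊢
    rcases ht with rfl | rfl | rfl | rfl <;> tauto)
  have hAD : A ≠ D := fun h => key A B C (by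
    intro t ht
    simp only [Set.mem_insert_iff, Set.mem_singleton_iff] at ht ⊢
    rcases ht with rfl | rfl | rfl | rfl <;> tauto)
  have hBC : B ≠ C := fun h => key A B D (by
    intro t ht
    simp only [Set.mem_insert_iff, Set.mem_singleton_iff] at ht ⊢
    rcases ht with rfl | rfl | rfl | rfl <;> tauto)
  have hBD : B ≠ D := fun h => key A B C (by
    intro t ht
    simp only [Set.mem_insert_iff, Set.mem_singleton_iff] at ht ⊢
    rcases ht with rfl | rfl | rfl | rfl <;> tauto)
  have hCD : C ≠ D := fun h => key A B C (by
    intro t ht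
    simp only [Set.mem_insert_iff, Set.mem_singleton_iff] at ht ⊢
    rcases ht with rfl | rfl | rfl | rfl <;> tauto)
  have mA : A ∈ ({A, B, C, D} : Set (EuclideanSpace ℝ (Fin n))) := by simp
  have mB : B ∈ ({A, B, C, D} : Set (EuclideanSpace ℝ (Fin n))) := by simp
  have mC : C ∈ ({A, B, C, D} : Set (EuclideanSpace ℝ (Fin n))) := by simp
  have mD : D ∈ ({A, B, C, D} : Set (EuclideanSpace ℝ (Fin n))) := by simp
  have tABC := perm3 h12 h13 h23 (hT A mA B mB C mC hAB hAC hBC).2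
  have tABD := perm3 h12 h13 h23 (hT A mA B mB D mD hAB hAD hBD).2
  have tACD := perm3 h12 h13 h23 (hT A mA C mC D mD hAC hAD hCD).2
  have tBCD := perm3 h12 h13 h23 (hT B mB C mC D mD hBC hBD hCD).2
  unfold P3 at tABC
  rcases tABC with ⟨e1, e2, e3⟩ | ⟨e1, e2, e3⟩ | ⟨e1, e2, e3⟩ | ⟨e1, e2, e3⟩ |
      ⟨e1, e2, e3⟩ | ⟨e1, e2, e3⟩
  · -- ab=d₁, ac=d₂, bc=d₃ : (A,B,C,D)
    rw [e1] at tABD; rw [e2] at tACD; rw [e3] at tBCD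
    obtain ⟨p, q, r⟩ := solve3 h12 h13 h23 tABD tACD tBCD
    exact ⟨A, B, C, D, rfl, e1, r, e2, q, p, e3⟩
  · -- ab=d₁, ac=d₃, bc=d₂ : (B,A,C,D)
    rw [e1] at tABD; rw [e2] at tACD; rw [e3] at tBCD
    obtain ⟨p, q, r⟩ := solve3 h12 h13 h23 (P3_swap23 tABD) tBCD tACD
    refine ⟨B, A, C, D, ?_, by rw [dist_comm]; exact e1, r, e3, q, p, e2⟩
    ext t; simp only [Set.mem_insert_iff, Set.mem_singleton_iff]; tauto
  · -- ab=d₂, ac=d₁, bc=d₃ : (A,C,B,D)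
    rw [e1] at tABD; rw [e2] at tACD; rw [e3] at tBCD
    obtain ⟨p, q, r⟩ := solve3 h12 h13 h23 tACD tABD (P3_swap23 tBCD)
    refine ⟨A, C, B, D, ?_, e2, r, e1, q, p, by rw [dist_comm]; exact e3⟩
    ext t; simp only [Set.mem_insert_iff, Set.mem_singleton_iff]; tauto
  · -- ab=d₂, ac=d₃, bc=d₁ : (B,C,A,D)
    rw [e1] at tABD; rw [e2] at tACD; rw [e3] at tBCD
    obtain ⟨p, q, r⟩ := solve3 h12 h13 h23 tBCD (P3_swap23 tABD) (P3_swap23 tACD)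
    refine ⟨B, C, A, D, ?_, e3, r, by rw [dist_comm]; exact e1, q, p,
      by rw [dist_comm]; exact e2⟩
    ext t; simp only [Set.mem_insert_iff, Set.mem_singleton_iff]; tauto
  · -- ab=d₃, ac=d₁, bc=d₂ : (C,A,B,D)
    rw [e1] at tABD; rw [e2] at tACD; rw [e3] at tBCD
    obtain ⟨p, q, r⟩ := solve3 h12 h13 h23 (P3_swap23 tACD) (P3_swap23 tBCD) tABD
    refine ⟨C, A, B, D, ?_, by rw [dist_comm]; exact e2, r,
      by rw [dist_comm]; exact e3, q, p, e1⟩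
    ext t; simp only [Set.mem_insert_iff, Set.mem_singleton_iff]; tauto
  · -- ab=d₃, ac=d₂, bc=d₁ : (C,B,A,D)
    rw [e1] at tABD; rw [e2] at tACD; rw [e3] at tBCD
    obtain ⟨p, q, r⟩ := solve3 h12 h13 h23 (P3_swap23 tBCD) (P3_swap23 tACD)
      (P3_swap23 tABD)
    refine ⟨C, B, A, D, ?_, by rw [dist_comm]; exact e3, r,
      by rw [dist_comm]; exact e2, q, p, by rw [dist_comm]; exact e1⟩
    ext t; simp only [Set.mem_insert_iff, Set.mem_singleton_iff]; tauto
end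

section
/- Any 4-point configuration in ℝ³ satisfying the isosceles-triangle distance graph (edges AB = CD = d₂ and AC = AD = BC = BD = d₁) that is coplanar must be the vertex set of a square, and then necessarily d₁ = (√2/2)·d₂. -/
open RealInnerProductSpace

/-- A coplanar 4-point configuration in ℝ³ with AB = CD = d₂ and
AC = AD = BC = BD = d₁ is the vertex set of a square (in cyclic order A, C, B, D:
four equal sides d₁ and equal diagonals d₂ which bisect each other), and
necessarily d₁ = (√2/2)·d₂. -/
theorem coplanar_isosceles_graph_is_square
    (A B C D : EuclideanSpace ℝ (Fin 3))
    (hdistinct : ({A, B, C, D} : Set (EuclideanSpace ℝ (Fin 3))).ncard = 4)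
    (d₁ d₂ : ℝ) (h₁ : 0 < d₁) (h₂ : 0 < d₂)
    (hAB : dist A B = d₂) (hCD : dist C D = d₂)
    (hAC : dist A C = d₁) (hAD : dist A D = d₁)
    (hBC : dist B C = d₁) (hBD : dist B D = d₁)
    (hcop : Coplanar ℝ ({A, B, C, D} : Set (EuclideanSpace ℝ (Fin 3)))) :
    midpoint ℝ A B = midpoint ℝ C D ∧ d₁ = Real.sqrt 2 / 2 * d₂ := by
  set u : EuclideanSpace ℝ (Fin 3) := B - A with hu
  set p : EuclideanSpace ℝ (Fin 3) := C - A with hp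
  set q : EuclideanSpace ℝ (Fin 3) := D - A with hq
  have hmemA : A ∈ ({A, B, C, D} : Set (EuclideanSpace ℝ (Fin 3))) := by simp
  have hmemB : B ∈ ({A, B, C, D} : Set (EuclideanSpace ℝ (Fin 3))) := by simp
  have hmemC : C ∈ ({A, B, C, D} : Set (EuclideanSpace ℝ (Fin 3))) := by simp
  have hmemD : D ∈ ({A, B, C, D} : Set (EuclideanSpace ℝ (Fin 3))) := by simp
  have huS : u ∈ vectorSpan ℝ ({A, B, C, D} : Set (EuclideanSpace ℝ (Fin 3))) :=
    vsub_mem_vectorSpan ℝ hmemB hmemA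
  have hpS : p ∈ vectorSpan ℝ ({A, B, C, D} : Set (EuclideanSpace ℝ (Fin 3))) :=
    vsub_mem_vectorSpan ℝ hmemC hmemA
  have hqS : q ∈ vectorSpan ℝ ({A, B, C, D} : Set (EuclideanSpace ℝ (Fin 3))) :=
    vsub_mem_vectorSpan ℝ hmemD hmemA
  -- the three vectors are not linearly independent, by coplanarity
  have hnli : ¬ LinearIndependent ℝ ![u, p, q] := by
    intro hli
    have hrange : Set.range ![u, p, q] ⊆
        (vectorSpan ℝ ({A, B, C, D} : Set (EuclideanSpace ℝ (Fin 3))) : Set _) := by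
      intro x hx
      obtain ⟨i, rfl⟩ := hx
      fin_cases i <;> simpa using (by assumption : _)
    have hle : Submodule.span ℝ (Set.range ![u, p, q]) ≤
        vectorSpan ℝ ({A, B, C, D} : Set (EuclideanSpace ℝ (Fin 3))) :=
      Submodule.span_le.2 hrange
    have h3 : Module.finrank ℝ (Submodule.span ℝ (Set.range ![u, p, q])) = 3 := by
      rw [finrank_span_eq_card hli]
      simp
    have hmono := Submodule.finrank_mono hle
    have h2 := hcop.finrank_le_two
    omega
  rw [Fintype.not_linearIndependent_iff] at hnli
  obtain ⟨g, hsum, i, hi⟩ := hnli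
  set a := g 0 with ha
  set b := g 1 with hb
  set c := g 2 with hc
  have hrel : a • u + b • p + c • q = 0 := by
    simpa [Fin.sum_univ_three, ← ha, ← hb, ← hc, add_assoc] using hsum
  -- inner product facts
  have huu : ⟪u, u⟫ = d₂ ^ 2 := by
    rw [real_inner_self_eq_norm_sq, hu, ← dist_eq_norm, dist_comm, hAB]
  have hpp : ⟪p, p⟫ = d₁ ^ 2 := by
    rw [real_inner_self_eq_norm_sq, hp, ← dist_eq_norm, dist_comm, hAC]
  have hqq : ⟪q, q⟫ = d₁ ^ 2 := by
    rw [real_inner_self_eq_norm_sq, hq, ← dist_eq_norm, dist_comm, hAD]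
  have hpu : ⟪p, u⟫ = d₂ ^ 2 / 2 := by
    have h1 : ‖p - u‖ ^ 2 = ‖p‖ ^ 2 - 2 * ⟪p, u⟫ + ‖u‖ ^ 2 := norm_sub_sq_real p u
    have h2 : ‖p - u‖ = d₁ := by
      rw [hp, hu, show C - A - (B - A) = C - B by abel, ← dist_eq_norm, dist_comm, hBC]
    have h3 : ‖p‖ = d₁ := by rw [hp, ← dist_eq_norm, dist_comm, hAC]
    have h4 : ‖u‖ = d₂ := by rw [hu, ← dist_eq_norm, dist_comm, hAB]
    rw [h2, h3, h4] at h1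
    linarith
  have hqu : ⟪q, u⟫ = d₂ ^ 2 / 2 := by
    have h1 : ‖q - u‖ ^ 2 = ‖q‖ ^ 2 - 2 * ⟪q, u⟫ + ‖u‖ ^ 2 := norm_sub_sq_real q u
    have h2 : ‖q - u‖ = d₁ := by
      rw [hq, hu, show D - A - (B - A) = D - B by abel, ← dist_eq_norm, dist_comm, hBD]
    have h3 : ‖q‖ = d₁ := by rw [hq, ← dist_eq_norm, dist_comm, hAD]
    have h4 : ‖u‖ = d₂ := by rw [hu, ← dist_eq_norm, dist_comm, hAB]
    rw [h2, h3, h4] at h1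
    linarith
  have hpq : ⟪p, q⟫ = d₁ ^ 2 - d₂ ^ 2 / 2 := by
    have h1 : ‖p - q‖ ^ 2 = ‖p‖ ^ 2 - 2 * ⟪p, q⟫ + ‖q‖ ^ 2 := norm_sub_sq_real p q
    have h2 : ‖p - q‖ = d₂ := by
      rw [hp, hq, show C - A - (D - A) = C - D by abel, ← dist_eq_norm, hCD]
    have h3 : ‖p‖ = d₁ := by rw [hp, ← dist_eq_norm, dist_comm, hAC]
    have h4 : ‖q‖ = d₁ := by rw [hq, ← dist_eq_norm, dist_comm, hAD]
    rw [h2, h3, h4] at h1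
    linarith
  -- take inner products of the relation with u, p, q
  have inner_rel : ∀ v : EuclideanSpace ℝ (Fin 3),
      a * ⟪u, v⟫ + b * ⟪p, v⟫ + c * ⟪q, v⟫ = 0 := by
    intro v
    have h := congrArg (fun w => ⟪w, v⟫) hrel
    simp only [inner_add_left, real_inner_smul_left, inner_zero_left] at h
    exact h
  have e1 := inner_rel u
  have e2 := inner_rel p
  have e3 := inner_rel q
  have hup : ⟪u, p⟫ = d₂ ^ 2 / 2 := by rw [real_inner_comm]; exact hpu
  have huq : ⟪u, q⟫ = d₂ ^ 2 / 2 := by rw [real_inner_comm]; exact hqu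
  have hqp : ⟪q, p⟫ = d₁ ^ 2 - d₂ ^ 2 / 2 := by rw [real_inner_comm]; exact hpq
  rw [huu, hpu, hqu] at e1
  rw [hup, hpp, hqp] at e2
  rw [huq, hpq, hqq] at e3
  have hd2 : (0:ℝ) < d₂ ^ 2 := by positivity
  -- algebra: b = c, a = -b
  have hbc : b = c := by
    have h : (b - c) * d₂ ^ 2 = 0 := by linear_combination 2 * e2 - 2 * e3
    rcases mul_eq_zero.1 h with h' | h'
    · linarith [sub_eq_zero.1 h']
    · exact absurd h' hd2.ne'
  have hab : a = -b := by
    have h : (a + b) * d₂ ^ 2 = 0 := by linear_combination e1 + d₂ ^ 2 / 2 * hbc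
    rcases mul_eq_zero.1 h with h' | h'
    · linarith
    · exact absurd h' hd2.ne'
  have hbne : b ≠ 0 := by
    intro hb0
    have ha0 : a = 0 := by rw [hab, hb0, neg_zero]
    have hc0 : c = 0 := hbc ▸ hb0
    fin_cases i <;> simp_all
  -- d₁² = d₂²/2
  have hkey : 2 * d₁ ^ 2 = d₂ ^ 2 := by
    have h : b * (2 * d₁ ^ 2 - d₂ ^ 2) = 0 := by
      linear_combination e2 - d₂ ^ 2 / 2 * hab + (d₁ ^ 2 - d₂ ^ 2 / 2) * hbc
    rcases mul_eq_zero.1 h with h' | h'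
    · exact absurd h' hbne
    · linarith
  constructor
  · -- midpoints coincide: u = p + q
    have hupq : u = p + q := by
      have h0 : b • (p + q - u) = 0 := by
        rw [← hrel, hab, hbc]
        module
      rcases smul_eq_zero.1 h0 with h | h
      · exact absurd h (hbc ▸ hbne)
      · exact (sub_eq_zero.1 h).symm
    have hsum' : A + B = C + D := by
      have h : B - A - ((C - A) + (D - A)) = 0 := sub_eq_zero.2 hupq
      have h2 : A + B - (C + D) = 0 := by
        calc A + B - (C + D) = B - A - ((C - A) + (D - A)) := by abel
        _ = 0 := h
      exact sub_eq_zero.1 h2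
    rw [midpoint_eq_smul_add, midpoint_eq_smul_add, hsum']
  · -- d₁ = √2/2 · d₂
    have hs2 : Real.sqrt 2 ^ 2 = 2 := Real.sq_sqrt (by norm_num)
    have hx : (0:ℝ) < Real.sqrt 2 / 2 * d₂ := by positivity
    have hfac : (d₁ - Real.sqrt 2 / 2 * d₂) * (d₁ + Real.sqrt 2 / 2 * d₂) = 0 := by
      linear_combination hkey / 2 - d₂ ^ 2 / 4 * hs2
    rcases mul_eq_zero.1 hfac with h | h
    · linarith [sub_eq_zero.1 h]
    · linarith
end

section
/- Any coplanar 4-point configuration A, B, C, D in ℝᵈ satisfying AB = CD = d₁, AC = BD = d₂, AD = BC = d₃ with d₁, d₂, d₃ pairwise distinct is the vertex set of a rectangle; in particular the largest of d₁, d₂, d₃ satisfies dᵢ² = dⱼ² + dₖ². -/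
open RealInnerProductSpace

variable {E : Type*} [NormedAddCommGroup E] [InnerProductSpace ℝ E]

lemma ortho_aux (A B C D : E) (h : dist A B = dist C D) :
    ⟪(A - B) + (C - D), (A - B) - (C - D)⟫ = 0 := by
  have h2 : ‖A - B‖ = ‖C - D‖ := by rwa [dist_eq_norm, dist_eq_norm] at h
  have : ⟪(A-B)+(C-D), (A-B)-(C-D)⟫ = ‖A-B‖^2 - ‖C-D‖^2 := by
    rw [inner_sub_right, inner_add_left, inner_add_left,
      real_inner_self_eq_norm_sq, real_inner_self_eq_norm_sq,
      real_inner_comm (C-D) (A-B)]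
    ring
  rw [this, h2]; ring

lemma rect_aux (A B C D : E) (hu : A + B = C + D) (h1 : dist A B = dist C D) :
    dist A B ^ 2 = dist A C ^ 2 + dist C B ^ 2 := by
  have hD : D = A + B - C := by rw [eq_sub_iff_add_eq, add_comm, ← hu, add_comm]
  subst hD
  set x := C - A with hx
  set y := C - B with hy
  have e1 : A - B = y - x := by rw [hx, hy]; abel
  have e2 : C - (A + B - C) = x + y := by rw [hx, hy]; abel
  have h2 : ‖y - x‖ = ‖x + y‖ := by
    rw [dist_eq_norm, dist_eq_norm, e1, e2] at h1; exact h1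
  have hadd := norm_add_sq_real x y
  have hsub := norm_sub_sq_real y x
  have hinner : ⟪y, x⟫ = 0 := by
    have h3 : ‖y - x‖ ^ 2 = ‖x + y‖ ^ 2 := by rw [h2]
    rw [hadd, hsub, real_inner_comm x y] at h3
    have : ⟪x, y⟫ = 0 := by linarith
    rw [real_inner_comm]; exact this
  have : dist A B ^ 2 = ‖y - x‖ ^ 2 := by rw [dist_eq_norm, e1]
  rw [this, hsub, hinner]
  rw [dist_eq_norm, dist_eq_norm]
  have : A - C = -x := by rw [hx]; abel
  rw [this, norm_neg, hy]
  ring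

lemma midpoint_of_add_eq (A B C D : E) (hu : A + B = C + D) :
    midpoint ℝ A B = midpoint ℝ C D := by
  rw [midpoint_eq_smul_add, midpoint_eq_smul_add, hu]

/-- A coplanar 4-point configuration in ℝᵈ with opposite edges pairwise equal to
pairwise distinct d₁, d₂, d₃ is the vertex set of a rectangle; in particular the
largest distance satisfies the Pythagorean relation with the other two. -/
theorem coplanar_scalene_graph_is_rectangle
    (n : ℕ)
    (A B C D : EuclideanSpace ℝ (Fin n))
    (hdistinct : ({A, B, C, D} : Set (EuclideanSpace ℝ (Fin n))).ncard = 4)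
    (d₁ d₂ d₃ : ℝ) (h₁ : 0 < d₁) (h₂ : 0 < d₂) (h₃ : 0 < d₃)
    (h12 : d₁ ≠ d₂) (h13 : d₁ ≠ d₃) (h23 : d₂ ≠ d₃)
    (hAB : dist A B = d₁) (hCD : dist C D = d₁)
    (hAC : dist A C = d₂) (hBD : dist B D = d₂)
    (hAD : dist A D = d₃) (hBC : dist B C = d₃)
    (hcop : Coplanar ℝ ({A, B, C, D} : Set (EuclideanSpace ℝ (Fin n)))) :
    (∃ P Q R S : EuclideanSpace ℝ (Fin n),
      ({P, Q, R, S} : Set (EuclideanSpace ℝ (Fin n))) = {A, B, C, D} ∧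
      midpoint ℝ P R = midpoint ℝ Q S ∧
      dist P R = dist Q S ∧
      dist P R ^ 2 = dist P Q ^ 2 + dist Q R ^ 2) ∧
    (d₁ ^ 2 = d₂ ^ 2 + d₃ ^ 2 ∨ d₂ ^ 2 = d₁ ^ 2 + d₃ ^ 2 ∨ d₃ ^ 2 = d₁ ^ 2 + d₂ ^ 2) := by
  classical
  set s : Set (EuclideanSpace ℝ (Fin n)) := {A, B, C, D} with hs
  -- the three "midpoint difference" vectors
  set u : EuclideanSpace ℝ (Fin n) := A + B - C - D with hu_def
  set v : EuclideanSpace ℝ (Fin n) := A + C - B - D with hv_def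
  set w : EuclideanSpace ℝ (Fin n) := A + D - B - C with hw_def
  have o_vw : ⟪v, w⟫ = 0 := by
    have h := ortho_aux A B C D (by rw [hAB, hCD])
    have e1 : (A - B) + (C - D) = v := by rw [hv_def]; abel
    have e2 : (A - B) - (C - D) = w := by rw [hw_def]; abel
    rwa [e1, e2] at h
  have o_uw : ⟪u, w⟫ = 0 := by
    have h := ortho_aux A C B D (by rw [hAC, hBD])
    have e1 : (A - C) + (B - D) = u := by rw [hu_def]; abel
    have e2 : (A - C) - (B - D) = w := by rw [hw_def]; abel
    rwa [e1, e2] at h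
  have o_uv : ⟪u, v⟫ = 0 := by
    have h := ortho_aux A D B C (by rw [hAD, hBC])
    have e1 : (A - D) + (B - C) = u := by rw [hu_def]; abel
    have e2 : (A - D) - (B - C) = v := by rw [hv_def]; abel
    rwa [e1, e2] at h
  -- memberships in the vectorSpan
  have hA : A ∈ s := by simp [hs]
  have hB : B ∈ s := by simp [hs]
  have hC : C ∈ s := by simp [hs]
  have hD : D ∈ s := by simp [hs]
  have hum : u ∈ vectorSpan ℝ s := by
    have h1 := vsub_mem_vectorSpan ℝ hA hC
    have h2 := vsub_mem_vectorSpan ℝ hB hD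
    rw [vsub_eq_sub] at h1 h2
    have e : (A - C) + (B - D) = u := by rw [hu_def]; abel
    exact e ▸ Submodule.add_mem _ h1 h2
  have hvm : v ∈ vectorSpan ℝ s := by
    have h1 := vsub_mem_vectorSpan ℝ hA hB
    have h2 := vsub_mem_vectorSpan ℝ hC hD
    rw [vsub_eq_sub] at h1 h2
    have e : (A - B) + (C - D) = v := by rw [hv_def]; abel
    exact e ▸ Submodule.add_mem _ h1 h2
  have hwm : w ∈ vectorSpan ℝ s := by
    have h1 := vsub_mem_vectorSpan ℝ hA hB
    have h2 := vsub_mem_vectorSpan ℝ hD hC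
    rw [vsub_eq_sub] at h1 h2
    have e : (A - B) + (D - C) = w := by rw [hw_def]; abel
    exact e ▸ Submodule.add_mem _ h1 h2
  -- one of u, v, w is zero, by coplanarity
  have hzero : u = 0 ∨ v = 0 ∨ w = 0 := by
    by_contra hcon
    push_neg at hcon
    obtain ⟨hu0, hv0, hw0⟩ := hcon
    set f : Fin 3 → (vectorSpan ℝ s) := ![⟨u, hum⟩, ⟨v, hvm⟩, ⟨w, hwm⟩] with hf
    have hli : LinearIndependent ℝ f := by
      apply linearIndependent_of_ne_zero_of_inner_eq_zero
      · intro i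
        fin_cases i
        · exact fun hh => hu0 (congrArg Subtype.val hh)
        · exact fun hh => hv0 (congrArg Subtype.val hh)
        · exact fun hh => hw0 (congrArg Subtype.val hh)
      · intro i j hij
        have o_vu : ⟪v, u⟫ = 0 := by rw [real_inner_comm]; exact o_uv
        have o_wu : ⟪w, u⟫ = 0 := by rw [real_inner_comm]; exact o_uw
        have o_wv : ⟪w, v⟫ = 0 := by rw [real_inner_comm]; exact o_vw
        fin_cases i <;> fin_cases j <;>
          first
            | exact absurd rfl hij
            | exact o_uv | exact o_uw | exact o_vw
            | exact o_vu | exact o_wu | exact o_wv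
    have hcard := hli.cardinal_le_rank
    rw [Cardinal.mk_fin] at hcard
    have h32 : (3 : Cardinal) ≤ 2 := hcard.trans hcop
    norm_num at h32
  rcases hzero with h | h | h
  · have hu : A + B = C + D := by
      rw [hu_def, sub_sub, sub_eq_zero] at h; exact h
    have hpy := rect_aux A B C D hu (by rw [hAB, hCD])
    constructor
    · refine ⟨A, C, B, D, ?_, midpoint_of_add_eq A B C D hu, by rw [hAB, hCD], hpy⟩
      ext x; simp [hs]; tauto
    · left
      rw [hAB, hAC, dist_comm C B, hBC] at hpy
      exact hpy
  · have hu : A + C = B + D := by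
      rw [hv_def, sub_sub, sub_eq_zero] at h; exact h
    have hpy := rect_aux A C B D hu (by rw [hAC, hBD])
    constructor
    · exact ⟨A, B, C, D, rfl, midpoint_of_add_eq A C B D hu, by rw [hAC, hBD], hpy⟩
    · right; left
      rw [hAC, hAB, hBC] at hpy
      exact hpy
  · have hu : A + D = B + C := by
      rw [hw_def, sub_sub, sub_eq_zero] at h; exact h
    have hpy := rect_aux A D B C hu (by rw [hAD, hBC])
    constructor
    · refine ⟨A, B, D, C, ?_, midpoint_of_add_eq A D B C hu, by rw [hAD, hBC], hpy⟩
      ext x; simp [hs]; tauto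
    · right; right
      rw [hAD, hAB, hBD] at hpy
      exact hpy
end

section
/- Suppose five points A₁,…,A₅ in ℝ³ are such that every triple forms an equilateral triangle of side e. Then A₁, A₂, A₃ span a plane P, and A₄, A₅ both lie on the line through the circumcenter p of triangle A₁A₂A₃ perpendicular to P; moreover d(A₄, A₅) = e forces d(A₄, p) = e/2, and the Pythagorean identity (e/2)² + (√3 e/3)² = e² fails, a contradiction. -/
/-- Five points in ℝ³, every triple of which forms an equilateral triangle of side e,
yield a contradiction (via the circumcenter/Pythagoras argument). -/
theorem no_five_equilateral_R3
    (A₁ A₂ A₃ A₄ A₅ : EuclideanSpace ℝ (Fin 3))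
    (e : ℝ) (he : 0 < e)
    (hT : ∀ p ∈ ({A₁, A₂, A₃, A₄, A₅} : Set (EuclideanSpace ℝ (Fin 3))),
      ∀ q ∈ ({A₁, A₂, A₃, A₄, A₅} : Set (EuclideanSpace ℝ (Fin 3))),
      ∀ r ∈ ({A₁, A₂, A₃, A₄, A₅} : Set (EuclideanSpace ℝ (Fin 3))),
      p ≠ q → p ≠ r → q ≠ r →
      dist p q = e ∧ dist p r = e ∧ dist q r = e)
    (hdistinct : ({A₁, A₂, A₃, A₄, A₅} : Set (EuclideanSpace ℝ (Fin 3))).ncard = 5) :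
    False := by
  have hcard : ∀ a b c d : EuclideanSpace ℝ (Fin 3),
      ({a, b, c, d} : Set (EuclideanSpace ℝ (Fin 3))).ncard ≤ 4 := by
    intro a b c d
    calc ({a, b, c, d} : Set (EuclideanSpace ℝ (Fin 3))).ncard
        ≤ ({b, c, d} : Set (EuclideanSpace ℝ (Fin 3))).ncard + 1 := Set.ncard_insert_le _ _
      _ ≤ (({c, d} : Set (EuclideanSpace ℝ (Fin 3))).ncard + 1) + 1 := by
          have := Set.ncard_insert_le b ({c, d} : Set (EuclideanSpace ℝ (Fin 3))); omega
      _ ≤ ((({d} : Set (EuclideanSpace ℝ (Fin 3))).ncard + 1) + 1) + 1 := by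
          have := Set.ncard_insert_le c ({d} : Set (EuclideanSpace ℝ (Fin 3))); omega
      _ = 4 := by rw [Set.ncard_singleton]
  have dup : ∀ a b c d : EuclideanSpace ℝ (Fin 3),
      ({A₁, A₂, A₃, A₄, A₅} : Set (EuclideanSpace ℝ (Fin 3))) = {a, b, c, d} → False := by
    intro a b c d h
    rw [h] at hdistinct
    have := hcard a b c d
    omega
  have h12 : A₁ ≠ A₂ := fun h => dup A₁ A₃ A₄ A₅ (by rw [← h]; ext x; simp <;> tauto)
  have h13 : A₁ ≠ A₃ := fun h => dup A₁ A₂ A₄ A₅ (by rw [← h]; ext x; simp <;> tauto)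
  have h14 : A₁ ≠ A₄ := fun h => dup A₁ A₂ A₃ A₅ (by rw [← h]; ext x; simp <;> tauto)
  have h15 : A₁ ≠ A₅ := fun h => dup A₁ A₂ A₃ A₄ (by rw [← h]; ext x; simp <;> tauto)
  have h23 : A₂ ≠ A₃ := fun h => dup A₁ A₂ A₄ A₅ (by rw [← h]; ext x; simp <;> tauto)
  have h24 : A₂ ≠ A₄ := fun h => dup A₁ A₂ A₃ A₅ (by rw [← h]; ext x; simp <;> tauto)
  have h25 : A₂ ≠ A₅ := fun h => dup A₁ A₂ A₃ A₄ (by rw [← h]; ext x; simp <;> tauto)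
  have h34 : A₃ ≠ A₄ := fun h => dup A₁ A₂ A₃ A₅ (by rw [← h]; ext x; simp <;> tauto)
  have h35 : A₃ ≠ A₅ := fun h => dup A₁ A₂ A₃ A₄ (by rw [← h]; ext x; simp <;> tauto)
  have h45 : A₄ ≠ A₅ := fun h => dup A₁ A₂ A₃ A₄ (by rw [← h]; ext x; simp <;> tauto)
  have m1 : A₁ ∈ ({A₁, A₂, A₃, A₄, A₅} : Set (EuclideanSpace ℝ (Fin 3))) := by simp
  have m2 : A₂ ∈ ({A₁, A₂, A₃, A₄, A₅} : Set (EuclideanSpace ℝ (Fin 3))) := by simp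
  have m3 : A₃ ∈ ({A₁, A₂, A₃, A₄, A₅} : Set (EuclideanSpace ℝ (Fin 3))) := by simp
  have m4 : A₄ ∈ ({A₁, A₂, A₃, A₄, A₅} : Set (EuclideanSpace ℝ (Fin 3))) := by simp
  have m5 : A₅ ∈ ({A₁, A₂, A₃, A₄, A₅} : Set (EuclideanSpace ℝ (Fin 3))) := by simp
  have d12 : dist A₁ A₂ = e := (hT A₁ m1 A₂ m2 A₃ m3 h12 h13 h23).1
  have d13 : dist A₁ A₃ = e := (hT A₁ m1 A₃ m3 A₂ m2 h13 h12 (Ne.symm h23)).1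
  have d14 : dist A₁ A₄ = e := (hT A₁ m1 A₄ m4 A₂ m2 h14 h12 (Ne.symm h24)).1
  have d15 : dist A₁ A₅ = e := (hT A₁ m1 A₅ m5 A₂ m2 h15 h12 (Ne.symm h25)).1
  have d23 : dist A₂ A₃ = e := (hT A₂ m2 A₃ m3 A₁ m1 h23 (Ne.symm h12) (Ne.symm h13)).1
  have d24 : dist A₂ A₄ = e := (hT A₂ m2 A₄ m4 A₁ m1 h24 (Ne.symm h12) (Ne.symm h14)).1
  have d25 : dist A₂ A₅ = e := (hT A₂ m2 A₅ m5 A₁ m1 h25 (Ne.symm h12) (Ne.symm h15)).1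
  have d34 : dist A₃ A₄ = e := (hT A₃ m3 A₄ m4 A₁ m1 h34 (Ne.symm h13) (Ne.symm h14)).1
  have d35 : dist A₃ A₅ = e := (hT A₃ m3 A₅ m5 A₁ m1 h35 (Ne.symm h13) (Ne.symm h15)).1
  have d45 : dist A₄ A₅ = e := (hT A₄ m4 A₅ m5 A₁ m1 h45 (Ne.symm h14) (Ne.symm h15)).1
  -- the four difference vectors
  have v : Fin 4 → EuclideanSpace ℝ (Fin 3) := ![A₂ - A₁, A₃ - A₁, A₄ - A₁, A₅ - A₁]
  clear v
  set v : Fin 4 → EuclideanSpace ℝ (Fin 3) := ![A₂ - A₁, A₃ - A₁, A₄ - A₁, A₅ - A₁] with hv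
  have hd : ∀ (a b : EuclideanSpace ℝ (Fin 3)), dist a b = e → ‖b - a‖ = e := by
    intro a b h
    rw [← dist_eq_norm, dist_comm]; exact h
  have hnorm : ∀ i, ‖v i‖ = e := by
    intro i
    fin_cases i
    · exact hd _ _ d12
    · exact hd _ _ d13
    · exact hd _ _ d14
    · exact hd _ _ d15
  have hd2 : ∀ (a b : EuclideanSpace ℝ (Fin 3)), dist a b = e →
      ‖(a - A₁) - (b - A₁)‖ = e := by
    intro a b h
    rw [sub_sub_sub_cancel_right, ← dist_eq_norm]; exact h
  have hsub : ∀ i j : Fin 4, i ≠ j → ‖v i - v j‖ = e := by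
    intro i j hij
    fin_cases i <;> fin_cases j
    · exact absurd rfl hij
    · exact hd2 _ _ d23
    · exact hd2 _ _ d24
    · exact hd2 _ _ d25
    · exact hd2 _ _ (dist_comm A₂ A₃ ▸ d23)
    · exact absurd rfl hij
    · exact hd2 _ _ d34
    · exact hd2 _ _ d35
    · exact hd2 _ _ (dist_comm A₂ A₄ ▸ d24)
    · exact hd2 _ _ (dist_comm A₃ A₄ ▸ d34)
    · exact absurd rfl hij
    · exact hd2 _ _ d45
    · exact hd2 _ _ (dist_comm A₂ A₅ ▸ d25)
    · exact hd2 _ _ (dist_comm A₃ A₅ ▸ d35)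
    · exact hd2 _ _ (dist_comm A₄ A₅ ▸ d45)
    · exact absurd rfl hij
  have hinner : ∀ i j : Fin 4, (inner ℝ (v i) (v j) : ℝ) = if i = j then e ^ 2 else e ^ 2 / 2 := by
    intro i j
    by_cases h : i = j
    · subst h
      rw [if_pos rfl, real_inner_self_eq_norm_sq, hnorm i]
    · simp only [h, if_false]
      have h1 : ‖v i - v j‖ ^ 2 = ‖v i‖ ^ 2 - 2 * inner ℝ (v i) (v j) + ‖v j‖ ^ 2 :=
        norm_sub_sq_real (v i) (v j)
      rw [hnorm i, hnorm j, hsub i j h] at h1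
      linarith
  have hli : LinearIndependent ℝ v := by
    rw [Fintype.linearIndependent_iff]
    intro g hg
    have hip : ∀ j : Fin 4, (∑ i, g i * inner ℝ (v i) (v j) : ℝ) = 0 := by
      intro j
      have h0 : inner ℝ (∑ i, g i • v i) (v j) = (0 : ℝ) := by rw [hg, inner_zero_left]
      rw [sum_inner] at h0
      simp only [real_inner_smul_left] at h0
      exact h0
    have he2 : (0:ℝ) < e ^ 2 := by positivity
    set s : ℝ := ∑ i, g i with hs
    have key : ∀ j : Fin 4, g j = -s := by
      intro j
      have h := hip j
      have hsum : (∑ i, g i * inner ℝ (v i) (v j) : ℝ) = e ^ 2 / 2 * (g j + s) := by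
        rw [Finset.sum_congr rfl (fun i _ => by rw [hinner i j])]
        rw [hs]
        rw [show (∑ i, g i * if i = j then e ^ 2 else e ^ 2 / 2 : ℝ)
            = ∑ i, (g i * (e ^ 2 / 2) + if i = j then g i * (e ^ 2 / 2) else 0) from
          Finset.sum_congr rfl (fun i _ => by by_cases h' : i = j <;> simp [h'] <;> ring)]
        rw [Finset.sum_add_distrib, Finset.sum_ite_eq' Finset.univ j (fun i => g i * (e ^ 2 / 2))]
        simp only [Finset.mem_univ, if_true, ← Finset.sum_mul]
        ring
      rw [hsum] at h
      have hz : g j + s = 0 := by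
        rcases mul_eq_zero.mp h with h' | h'
        · exfalso; nlinarith
        · exact h'
      linarith
    have hs0 : s = 0 := by
      have h4 : s = ∑ _i : Fin 4, (-s) :=
        hs.trans (Finset.sum_congr rfl (fun i _ => key i))
      simp [Finset.sum_const] at h4
      linarith
    intro i
    rw [key i, hs0, neg_zero]
  have hle := hli.fintype_card_le_finrank
  rw [finrank_euclideanSpace_fin] at hle
  simp at hle
end

section
/- For d ≥ 4, any set S ⊂ ℝᵈ determining exactly one distinct triangle satisfies |S| ≤ d + 1, with equality only if S is the vertex set of a regular d-simplex. -/
open scoped RealInnerProductSpace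

private lemma equidist_affineIndependent {n : ℕ} {ι : Type*} {p : ι → EuclideanSpace ℝ (Fin n)}
    {e : ℝ} (he : 0 < e) (h : ∀ i j : ι, i ≠ j → dist (p i) (p j) = e) :
    AffineIndependent ℝ p := by
  classical
  rw [affineIndependent_iff]
  intro s w hw hsum i hi
  have h0 : ⟪∑ j ∈ s, w j • p j, ∑ j ∈ s, w j • p j⟫ = 0 := by
    rw [hsum]; simp
  rw [inner_sum_smul_sum_smul_of_sum_eq_zero p hw p hw] at h0
  have hterm : ∀ i' ∈ s, ∑ j ∈ s, w i' * w j * (‖p i' - p j‖ * ‖p i' - p j‖)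
      = - (w i' ^ 2 * e ^ 2) := by
    intro i' _
    have : ∀ j ∈ s, w i' * w j * (‖p i' - p j‖ * ‖p i' - p j‖)
        = w i' * w j * e ^ 2 - (if j = i' then w i' * w j * e ^ 2 else 0) := by
      intro j _
      by_cases hji : j = i'
      · subst hji; simp
      · have : ‖p i' - p j‖ = e := by
          rw [← dist_eq_norm]; exact h _ _ fun hh => hji hh.symm
        rw [this, if_neg hji]; ring
    rw [Finset.sum_congr rfl this, Finset.sum_sub_distrib,
      Finset.sum_ite_eq' s i' (fun j => w i' * w j * e ^ 2), if_pos ‹i' ∈ s›]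
    have h1 : ∑ j ∈ s, w i' * w j * e ^ 2 = w i' * e ^ 2 * ∑ j ∈ s, w j := by
      rw [Finset.mul_sum]; exact Finset.sum_congr rfl fun j _ => by ring
    rw [h1, hw]; ring
  rw [Finset.sum_congr rfl hterm, Finset.sum_neg_distrib] at h0
  have h2 : ∑ i' ∈ s, w i' ^ 2 * e ^ 2 = 0 := by
    have := h0
    field_simp at this
    linarith [this]
  have h3 : ∑ i' ∈ s, w i' ^ 2 = 0 := by
    have : (∑ i' ∈ s, w i' ^ 2) * e ^ 2 = 0 := by
      rw [Finset.sum_mul]; exact h2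
    rcases mul_eq_zero.1 this with hh | hh
    · exact hh
    · exact absurd hh (by positivity)
  have h4 := (Finset.sum_eq_zero_iff_of_nonneg (fun j _ => sq_nonneg (w j))).1 h3 i hi
  exact pow_eq_zero_iff (by norm_num) |>.1 h4

set_option maxHeartbeats 1000000 in
/-- For d ≥ 4, any set S ⊂ ℝᵈ determining exactly one distinct triangle has
|S| ≤ d + 1, with equality only if S is the vertex set of a regular d-simplex. -/
theorem one_triangle_card_le_high_dim
    (d : ℕ) (hd : 4 ≤ d)
    (S : Finset (EuclideanSpace ℝ (Fin d)))
    (t₁ t₂ t₃ : ℝ)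
    (hT : ∀ a ∈ S, ∀ b ∈ S, ∀ c ∈ S, a ≠ b → a ≠ c → b ≠ c →
      ¬ Collinear ℝ ({a, b, c} : Set (EuclideanSpace ℝ (Fin d))) →
      ({dist a b, dist a c, dist b c} : Multiset ℝ) = {t₁, t₂, t₃})
    (hnonempty : ∃ a ∈ S, ∃ b ∈ S, ∃ c ∈ S, a ≠ b ∧ a ≠ c ∧ b ≠ c ∧
      ¬ Collinear ℝ ({a, b, c} : Set (EuclideanSpace ℝ (Fin d)))) :
    S.card ≤ d + 1 ∧
    (S.card = d + 1 → ∃ e : ℝ, 0 < e ∧ ∀ p ∈ S, ∀ q ∈ S, p ≠ q → dist p q = e) := by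
  classical

  -- L1 : for any distinct pair, some point of S is off their line
  have L1 : ∀ p q : EuclideanSpace ℝ (Fin d), p ≠ q → ∃ w ∈ S, ¬ Collinear ℝ ({p, q, w} : Set (EuclideanSpace ℝ (Fin d))) := by
    intro p q hpq
    by_contra hcon
    push_neg at hcon
    obtain ⟨a, ha, b, hb, c, hc, hab, hac, hbc, hnc⟩ := hnonempty
    have hca := hcon a ha
    have hcb := hcon b hb
    have hcc := hcon c hc
    have ma : a ∈ line[ℝ, p, q] :=
      hca.mem_affineSpan_of_mem_of_ne (by simp) (by simp) (by simp) hpq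
    have mb : b ∈ line[ℝ, p, q] :=
      hcb.mem_affineSpan_of_mem_of_ne (by simp) (by simp) (by simp) hpq
    have mc : c ∈ line[ℝ, p, q] :=
      hcc.mem_affineSpan_of_mem_of_ne (by simp) (by simp) (by simp) hpq
    have hcol := collinear_insert_insert_insert_of_mem_affineSpan_pair ma mb mc
    exact hnc (hcol.subset (by intro x hx; simp at hx ⊢; tauto))
  by_cases h123 : t₁ = t₂ ∧ t₁ = t₃
  · -- equilateral case
    obtain ⟨h12, h13⟩ := h123
    subst h12; subst h13
    have hallEq : ∀ p ∈ S, ∀ q ∈ S, p ≠ q → dist p q = t₁ := by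
      intro p hp q hq hpq
      obtain ⟨w, hwS, hwnc⟩ := L1 p q hpq
      have hpw : p ≠ w := by
        rintro rfl
        exact hwnc (Collinear.subset (by intro x hx; simp at hx ⊢; tauto)
          (collinear_pair ℝ p q))
      have hqw : q ≠ w := by
        rintro rfl
        exact hwnc (Collinear.subset (by intro x hx; simp at hx ⊢; tauto)
          (collinear_pair ℝ p q))
      have heq := hT p hp q hq w hwS hpq hpw hqw hwnc
      have hmem : dist p q ∈ ({t₁, t₁, t₁} : Multiset ℝ) := by
        rw [← heq]; simp
      simpa using hmem
    obtain ⟨a, ha, b, hb, _c, _hc, hab, -, -, -⟩ := hnonempty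
    have he : 0 < t₁ := by
      rw [← hallEq a ha b hb hab]; exact dist_pos.2 hab
    have hAI : AffineIndependent ℝ (fun i : ↥S => (i : EuclideanSpace ℝ (Fin d))) :=
      equidist_affineIndependent he
        (fun i j hij => hallEq _ i.2 _ j.2 (Subtype.coe_injective.ne hij))
    have hcard := hAI.card_le_finrank_succ
    have hrk : Module.finrank ℝ (vectorSpan ℝ (Set.range (fun i : ↥S => (i : EuclideanSpace ℝ (Fin d))))) ≤ d :=
      le_trans (Submodule.finrank_le _) (le_of_eq finrank_euclideanSpace_fin)
    rw [Fintype.card_coe] at hcard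
    exact ⟨by omega, fun _ => ⟨t₁, he, hallEq⟩⟩
  · -- non-equilateral case
    push_neg at h123
    -- pick a side length of multiplicity one
    have hu : ∃ u : ℝ, Multiset.count u ({t₁, t₂, t₃} : Multiset ℝ) = 1 := by
      by_cases h12 : t₁ = t₂
      · have h13 : t₁ ≠ t₃ := h123 h12
        refine ⟨t₃, ?_⟩
        simp [Multiset.count_cons, Multiset.count_singleton,
          (Ne.symm h13), (Ne.symm (h12 ▸ h13))]
      · by_cases h13 : t₁ = t₃
        · refine ⟨t₂, ?_⟩
          simp [Multiset.count_cons, Multiset.count_singleton,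
            (Ne.symm h12), (h13 ▸ Ne.symm h12)]
        · by_cases h23 : t₂ = t₃
          · exact ⟨t₁, by simp [Multiset.count_cons, Multiset.count_singleton,
              h12, h13]⟩
          · exact ⟨t₃, by simp [Multiset.count_cons, Multiset.count_singleton,
              Ne.symm h13, Ne.symm h23]⟩
    obtain ⟨u, hu⟩ := hu
    -- no three points of S are collinear
    have key : ∀ x ∈ S, ∀ y ∈ S, ∀ z ∈ S, Collinear ℝ ({x, y, z} : Set (EuclideanSpace ℝ (Fin d))) →
        Sbtw ℝ x y z → False := by
      intro x hx y hy z hz hcol hsb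
      have hxy : x ≠ y := (hsb.ne_left).symm
      have hyz : y ≠ z := hsb.ne_right
      have hxz : x ≠ z := hsb.left_ne_right
      obtain ⟨w, hwS, hwnc⟩ := L1 x z hxz
      have hwx : w ≠ x := by
        rintro rfl
        exact hwnc (Collinear.subset (by intro t ht; simp at ht ⊢; tauto)
          (collinear_pair ℝ w z))
      have hwz : w ≠ z := by
        rintro rfl
        exact hwnc (Collinear.subset (by intro t ht; simp at ht ⊢; tauto)
          (collinear_pair ℝ x w))
      have hwy : w ≠ y := by
        rintro rfl
        exact hwnc (hcol.subset (by intro t ht; simp at ht ⊢; tauto))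
      -- memberships in line[x,z]
      have hyline : y ∈ line[ℝ, x, z] :=
        hcol.mem_affineSpan_of_mem_of_ne (by simp) (by simp) (by simp) hxz
      have hsub_xy : line[ℝ, x, y] ≤ line[ℝ, x, z] := by
        apply affineSpan_le.2
        intro t ht
        rcases ht with rfl | ht
        · exact left_mem_affineSpan_pair ℝ _ _
        · rcases ht with rfl; exact hyline
      have hsub_yz : line[ℝ, y, z] ≤ line[ℝ, x, z] := by
        apply affineSpan_le.2
        intro t ht
        rcases ht with rfl | ht
        · exact hyline
        · rcases ht with rfl; exact right_mem_affineSpan_pair ℝ _ _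
      have hnc1 : ¬ Collinear ℝ ({x, y, w} : Set (EuclideanSpace ℝ (Fin d))) := by
        intro hc
        have hwline : w ∈ line[ℝ, x, y] :=
          hc.mem_affineSpan_of_mem_of_ne (by simp) (by simp) (by simp) hxy
        have : Collinear ℝ ({w, x, z} : Set (EuclideanSpace ℝ (Fin d))) :=
          collinear_insert_of_mem_affineSpan_pair (hsub_xy hwline)
        exact hwnc (this.subset (by intro t ht; simp at ht ⊢; tauto))
      have hnc2 : ¬ Collinear ℝ ({y, z, w} : Set (EuclideanSpace ℝ (Fin d))) := by
        intro hc
        have hwline : w ∈ line[ℝ, y, z] :=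
          hc.mem_affineSpan_of_mem_of_ne (by simp) (by simp) (by simp) hyz
        have : Collinear ℝ ({w, x, z} : Set (EuclideanSpace ℝ (Fin d))) :=
          collinear_insert_of_mem_affineSpan_pair (hsub_yz hwline)
        exact hwnc (this.subset (by intro t ht; simp at ht ⊢; tauto))
      -- the three congruent triangles
      have E1 := hT x hx y hy w hwS hxy hwx.symm hwy.symm hnc1
      have E2 := hT y hy z hz w hwS hyz hwy.symm hwz.symm hnc2
      have E3 := hT x hx z hz w hwS hxz hwx.symm hwz.symm hwnc
      set cmax := max t₁ (max t₂ t₃) with hcmax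
      have hle : ∀ v : ℝ, v ∈ ({t₁, t₂, t₃} : Multiset ℝ) → v ≤ cmax := by
        intro v hv
        simp only [Multiset.insert_eq_cons, Multiset.mem_cons, Multiset.mem_singleton] at hv
        rcases hv with rfl | rfl | rfl
        · exact le_max_left _ _
        · exact le_trans (le_max_left _ _) (le_max_right _ _)
        · exact le_trans (le_max_right _ _) (le_max_right _ _)
      have hcm : cmax ∈ ({t₁, t₂, t₃} : Multiset ℝ) := by
        rcases max_choice t₁ (max t₂ t₃) with h | h <;> rw [hcmax, h]
        · simp
        · rcases max_choice t₂ t₃ with h' | h' <;> rw [h'] <;> simp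
      -- distances
      have hd13 : dist x y + dist y z = dist x z := hsb.wbtw.dist_add_dist
      have hr1le : dist x w ≤ cmax := hle _ (by rw [← E1]; simp)
      have hr3le : dist z w ≤ cmax := hle _ (by rw [← E2]; simp)
      have hd13le : dist x z ≤ cmax := hle _ (by rw [← E3]; simp)
      have hr2lt : dist y w < cmax :=
        lt_of_lt_of_le (hsb.dist_lt_max_dist w) (max_le hr1le hr3le)
      have hd12lt : dist x y < cmax := by
        have : dist x y < dist x z := by
          have := dist_pos.2 hyz; linarith
        linarith
      have hd23lt : dist y z < cmax := by
        have : dist y z < dist x z := by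
          have := dist_pos.2 hxy; linarith
        linarith
      -- cmax = dist x w and cmax = dist z w
      have hr1 : dist x w = cmax := by
        have : cmax ∈ ({dist x y, dist x w, dist y w} : Multiset ℝ) := by rw [E1]; exact hcm
        simp only [Multiset.insert_eq_cons, Multiset.mem_cons, Multiset.mem_singleton] at this
        rcases this with h | h | h
        · exact absurd h.symm (ne_of_lt hd12lt)
        · exact h.symm
        · exact absurd h.symm (ne_of_lt hr2lt)
      have hr3 : dist z w = cmax := by
        have : cmax ∈ ({dist y z, dist y w, dist z w} : Multiset ℝ) := by rw [E2]; exact hcm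
        simp only [Multiset.insert_eq_cons, Multiset.mem_cons, Multiset.mem_singleton] at this
        rcases this with h | h | h
        · exact absurd h.symm (ne_of_lt hd23lt)
        · exact absurd h.symm (ne_of_lt hr2lt)
        · exact h.symm
      -- count contradiction
      have c1 : Multiset.count cmax ({dist x y, dist x w, dist y w} : Multiset ℝ) = 1 := by
        simp [Multiset.insert_eq_cons, Multiset.count_cons, Multiset.count_singleton,
          hr1, ne_of_lt hd12lt, ne_of_lt hr2lt]
        rw [if_neg (ne_of_gt hd12lt), if_neg (ne_of_gt hr2lt)]
      have c3 : 2 ≤ Multiset.count cmax ({dist x z, dist x w, dist z w} : Multiset ℝ) := by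
        simp [Multiset.insert_eq_cons, Multiset.count_cons, Multiset.count_singleton, hr1, hr3]
      rw [E1] at c1
      rw [E3] at c3
      omega
    have L3 : ∀ x ∈ S, ∀ y ∈ S, ∀ z ∈ S, x ≠ y → x ≠ z → y ≠ z →
        ¬ Collinear ℝ ({x, y, z} : Set (EuclideanSpace ℝ (Fin d))) := by
      intro x hx y hy z hz hxy hxz hyz hcol
      rcases hcol.wbtw_or_wbtw_or_wbtw with h | h | h
      · exact key x hx y hy z hz hcol ⟨h, Ne.symm hxy, hyz⟩
      · have hcol' : Collinear ℝ ({y, z, x} : Set (EuclideanSpace ℝ (Fin d))) :=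
          hcol.subset (by intro t ht; simp at ht ⊢; tauto)
        exact key y hy z hz x hx hcol' ⟨h, Ne.symm hyz, Ne.symm hxz⟩
      · have hcol' : Collinear ℝ ({z, x, y} : Set (EuclideanSpace ℝ (Fin d))) :=
          hcol.subset (by intro t ht; simp at ht ⊢; tauto)
        exact key z hz x hx y hy hcol' ⟨h, hxz, hxy⟩
    have H : ∀ p ∈ S, ∀ q ∈ S, ∀ r ∈ S, p ≠ q → p ≠ r → q ≠ r →
        ({dist p q, dist p r, dist q r} : Multiset ℝ) = {t₁, t₂, t₃} :=
      fun p hp q hq r hr h1 h2 h3 => hT p hp q hq r hr h1 h2 h3 (L3 p hp q hq r hr h1 h2 h3)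
    -- u-edges form a matching
    have uniq : ∀ p ∈ S, ∀ q ∈ S, ∀ r ∈ S, p ≠ q → p ≠ r → q ≠ r →
        dist p q = u → dist p r = u → False := by
      intro p hp q hq r hr h1 h2 h3 e1 e2
      have hh := H p hp q hq r hr h1 h2 h3
      have : 2 ≤ Multiset.count u ({dist p q, dist p r, dist q r} : Multiset ℝ) := by
        simp [Multiset.insert_eq_cons, Multiset.count_cons, Multiset.count_singleton, e1, e2]
      rw [hh] at this
      omega
    have hcard4 : S.card ≤ 4 := by
      by_contra hc
      push_neg at hc
      obtain ⟨a0, ha0, -⟩ := hnonempty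
      set N := S.filter (fun q => q ≠ a0 ∧ dist a0 q = u) with hN
      have hN1 : N.card ≤ 1 := by
        rw [Finset.card_le_one]
        intro q hq r hr
        simp only [hN, Finset.mem_filter] at hq hr
        by_contra hqr
        exact uniq a0 ha0 q hq.1 r hr.1 (Ne.symm hq.2.1) (Ne.symm hr.2.1) hqr hq.2.2 hr.2.2
      set B := S.filter (fun q => q ≠ a0 ∧ dist a0 q ≠ u) with hB
      have hsub : S ⊆ insert a0 (N ∪ B) := by
        intro q hq
        by_cases hqa : q = a0
        · simp [hqa]
        · by_cases hdq : dist a0 q = u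
          · simp [hN, Finset.mem_filter, hq, hqa, hdq]
          · simp [hB, Finset.mem_filter, hq, hqa, hdq]
      have hB3 : 3 ≤ B.card := by
        have h1 := Finset.card_le_card hsub
        have h2 := Finset.card_insert_le a0 (N ∪ B)
        have h3 := Finset.card_union_le N B
        omega
      obtain ⟨T, hTB, hT3⟩ := Finset.exists_subset_card_eq hB3
      obtain ⟨x, y, z, hxy, hxz, hyz, rfl⟩ := Finset.card_eq_three.1 hT3
      have hxB := hTB (by simp : x ∈ ({x, y, z} : Finset (EuclideanSpace ℝ (Fin d))))
      have hyB := hTB (by simp : y ∈ ({x, y, z} : Finset (EuclideanSpace ℝ (Fin d))))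
      have hzB := hTB (by simp : z ∈ ({x, y, z} : Finset (EuclideanSpace ℝ (Fin d))))
      simp only [hB, Finset.mem_filter] at hxB hyB hzB
      have humem : u ∈ ({t₁, t₂, t₃} : Multiset ℝ) := Multiset.count_pos.1 (by omega)
      have exy : dist x y = u := by
        have hh := H a0 ha0 x hxB.1 y hyB.1 (Ne.symm hxB.2.1) (Ne.symm hyB.2.1) hxy
        have : u ∈ ({dist a0 x, dist a0 y, dist x y} : Multiset ℝ) := by rw [hh]; exact humem
        simp only [Multiset.insert_eq_cons, Multiset.mem_cons, Multiset.mem_singleton] at this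
        rcases this with h | h | h
        · exact absurd h.symm hxB.2.2
        · exact absurd h.symm hyB.2.2
        · exact h.symm
      have exz : dist x z = u := by
        have hh := H a0 ha0 x hxB.1 z hzB.1 (Ne.symm hxB.2.1) (Ne.symm hzB.2.1) hxz
        have : u ∈ ({dist a0 x, dist a0 z, dist x z} : Multiset ℝ) := by rw [hh]; exact humem
        simp only [Multiset.insert_eq_cons, Multiset.mem_cons, Multiset.mem_singleton] at this
        rcases this with h | h | h
        · exact absurd h.symm hxB.2.2
        · exact absurd h.symm hzB.2.2
        · exact h.symm
      exact uniq x hxB.1 y hyB.1 z hzB.1 hxy hxz hyz exy exz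
    exact ⟨by omega, fun hcc => absurd hcc (by omega)⟩
end

section
/- In ℝ³, the maximum size of a point set determining exactly one distinct triangle is 4, achieved both by the regular tetrahedron (equilateral triangle) and by a rectangle (right triangle). -/
/-- A point of ℝ³ given by its coordinates. -/
def pt3 (x y z : ℝ) : EuclideanSpace ℝ (Fin 3) := WithLp.toLp 2 ![x, y, z]

/-- A finite set `S` determines exactly one distinct triangle: it contains some
non-collinear triple, and any two non-collinear triples of distinct points of `S`
have the same multiset of pairwise distances. -/
def DeterminesOneTriangle (S : Finset (EuclideanSpace ℝ (Fin 3))) : Prop :=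
  (∃ a ∈ S, ∃ b ∈ S, ∃ c ∈ S, a ≠ b ∧ a ≠ c ∧ b ≠ c ∧
    ¬ Collinear ℝ ({a, b, c} : Set (EuclideanSpace ℝ (Fin 3)))) ∧
  (∀ a ∈ S, ∀ b ∈ S, ∀ c ∈ S, a ≠ b → a ≠ c → b ≠ c →
    ¬ Collinear ℝ ({a, b, c} : Set (EuclideanSpace ℝ (Fin 3))) →
    ∀ a' ∈ S, ∀ b' ∈ S, ∀ c' ∈ S, a' ≠ b' → a' ≠ c' → b' ≠ c' →
    ¬ Collinear ℝ ({a', b', c'} : Set (EuclideanSpace ℝ (Fin 3))) →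
    ({dist a b, dist a c, dist b c} : Multiset ℝ) =
      {dist a' b', dist a' c', dist b' c'})

abbrev E3 := EuclideanSpace ℝ (Fin 3)

open RealInnerProductSpace

lemma strict_tri {x y z : E3} (h : ¬ Collinear ℝ ({x, y, z} : Set E3)) :
    dist x z < dist x y + dist y z := by
  rcases (dist_triangle x y z).lt_or_eq with h' | h'
  · exact h'
  · exact absurd (dist_add_dist_eq_iff.mp h'.symm).collinear h

lemma strict_triB {x y z : E3} (h : ¬ Collinear ℝ ({x, y, z} : Set E3)) :
    dist y z < dist y x + dist x z := by
  refine strict_tri (fun h' => h (h'.subset ?_))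
  intro p hp; simp at hp ⊢; tauto

lemma msum (a b c : ℝ) : ({a,b,c} : Multiset ℝ).sum = a + b + c := by
  simp [Multiset.insert_eq_cons]; ring

lemma step0 (S : Finset E3) (h : DeterminesOneTriangle S) :
    ∀ x ∈ S, ∀ y ∈ S, ∀ z ∈ S, x ≠ y → x ≠ z → y ≠ z →
      ¬ Collinear ℝ ({x, y, z} : Set E3) := by
  obtain ⟨⟨a, ha, b, hb, c, hc, hab, hac, hbc, habc⟩, h2⟩ := h
  intro x hx y hy z hz hxy hxz hyz hcol
  obtain ⟨w, hwS, hw⟩ : ∃ w, w ∈ S ∧ w ∉ line[ℝ, x, y] := by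
    by_contra hno
    push_neg at hno
    exact habc (collinear_triple_of_mem_affineSpan_pair (hno a ha) (hno b hb) (hno c hc))
  have hzline : z ∈ line[ℝ, x, y] :=
    hcol.mem_affineSpan_of_mem_of_ne (by simp) (by simp) (by simp) hxy
  have hxz_sub : line[ℝ, x, z] ≤ line[ℝ, x, y] :=
    affineSpan_le.2 (Set.insert_subset_iff.2
      ⟨left_mem_affineSpan_pair ℝ x y, Set.singleton_subset_iff.2 hzline⟩)
  have hyz_sub : line[ℝ, y, z] ≤ line[ℝ, x, y] :=
    affineSpan_le.2 (Set.insert_subset_iff.2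
      ⟨right_mem_affineSpan_pair ℝ x y, Set.singleton_subset_iff.2 hzline⟩)
  have n1 : ¬ Collinear ℝ ({x, y, w} : Set E3) := fun hc' =>
    hw (hc'.mem_affineSpan_of_mem_of_ne (by simp) (by simp) (by simp) hxy)
  have n2 : ¬ Collinear ℝ ({x, z, w} : Set E3) := fun hc' =>
    hw (hxz_sub (hc'.mem_affineSpan_of_mem_of_ne (by simp) (by simp) (by simp) hxz))
  have n3 : ¬ Collinear ℝ ({y, z, w} : Set E3) := fun hc' =>
    hw (hyz_sub (hc'.mem_affineSpan_of_mem_of_ne (by simp) (by simp) (by simp) hyz))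
  have e1 := h2 x hx y hy w hwS hxy (ne₁₃_of_not_collinear n1) (ne₂₃_of_not_collinear n1) n1
    a ha b hb c hc hab hac hbc habc
  have e2 := h2 x hx z hz w hwS hxz (ne₁₃_of_not_collinear n2) (ne₂₃_of_not_collinear n2) n2
    a ha b hb c hc hab hac hbc habc
  have e3 := h2 y hy z hz w hwS hyz (ne₁₃_of_not_collinear n3) (ne₂₃_of_not_collinear n3) n3
    a ha b hb c hc hab hac hbc habc
  have s1 : dist x y + dist x w + dist y w = dist a b + dist a c + dist b c := by
    have := congrArg Multiset.sum e1; rwa [msum, msum] at this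
  have s2 : dist x z + dist x w + dist z w = dist a b + dist a c + dist b c := by
    have := congrArg Multiset.sum e2; rwa [msum, msum] at this
  have s3 : dist y z + dist y w + dist z w = dist a b + dist a c + dist b c := by
    have := congrArg Multiset.sum e3; rwa [msum, msum] at this
  have c1 := dist_comm x z
  have c2 := dist_comm x y
  have c3 := dist_comm y z
  rcases hcol.wbtw_or_wbtw_or_wbtw with hB | hB | hB
  · have hd := hB.dist_add_dist
    have hst := strict_tri n3
    linarith
  · have hd := hB.dist_add_dist
    have hst := strict_triB n2
    linarith
  · have hd := hB.dist_add_dist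
    have hst := strict_tri n1
    linarith
lemma graph5 (E : Fin 5 → Fin 5 → Prop)
    (one : ∀ i j k : Fin 5, i ≠ j → i ≠ k → j ≠ k →
      (E i j ∧ ¬E i k ∧ ¬E j k) ∨ (¬E i j ∧ E i k ∧ ¬E j k) ∨ (¬E i j ∧ ¬E i k ∧ E j k)) :
    False := by
  have aux : ∀ a b c d e : Fin 5, a ≠ b → a ≠ c → a ≠ d → a ≠ e → b ≠ c → b ≠ d → b ≠ e →
      c ≠ d → c ≠ e → d ≠ e → E a b → False := by
    intro a b c d e hab hac had hae hbc hbd hbe hcd hce hde hEab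
    have f : ∀ x : Fin 5, a ≠ x → b ≠ x → ¬E a x ∧ ¬E b x := by
      intro x hax hbx
      rcases one a b x hab hax hbx with h | h | h <;> tauto
    obtain ⟨hac', hbc'⟩ := f c hac hbc
    obtain ⟨had', hbd'⟩ := f d had hbd
    obtain ⟨hae', hbe'⟩ := f e hae hbe
    rcases one c d e hcd hce hde with h | h | h
    · rcases one a c e hac hae hce with h' | h' | h' <;> tauto
    · rcases one a c d hac had hcd with h' | h' | h' <;> tauto
    · rcases one a c d hac had hcd with h' | h' | h' <;> tauto
  rcases one 0 1 2 (by decide) (by decide) (by decide) with h | h | h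
  · exact aux 0 1 2 3 4 (by decide) (by decide) (by decide) (by decide) (by decide) (by decide)
      (by decide) (by decide) (by decide) (by decide) h.1
  · exact aux 0 2 1 3 4 (by decide) (by decide) (by decide) (by decide) (by decide) (by decide)
      (by decide) (by decide) (by decide) (by decide) h.2.1
  · exact aux 1 2 0 3 4 (by decide) (by decide) (by decide) (by decide) (by decide) (by decide)
      (by decide) (by decide) (by decide) (by decide) h.2.2


lemma count_explicit (a b c v : ℝ) : Multiset.count v ({a,b,c} : Multiset ℝ) =
    (if v = a then 1 else 0) + (if v = b then 1 else 0) + (if v = c then 1 else 0) := by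
  show Multiset.count v (a ::ₘ b ::ₘ {c}) = _
  rw [Multiset.count_cons, Multiset.count_cons, Multiset.count_singleton]
  ring

lemma exactly_one_of_count {a b c v : ℝ} (h : Multiset.count v ({a,b,c} : Multiset ℝ) = 1) :
    (a = v ∧ ¬b = v ∧ ¬c = v) ∨ (¬a = v ∧ b = v ∧ ¬c = v) ∨ (¬a = v ∧ ¬b = v ∧ c = v) := by
  rw [count_explicit] at h
  split_ifs at h with h1 h2 h3 h4 h5 h6 h7
  · norm_num at h
  · norm_num at h
  · norm_num at h
  · exact Or.inl ⟨h1.symm, fun e => h2 e.symm, fun e => h4 e.symm⟩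
  · norm_num at h
  · exact Or.inr (Or.inl ⟨fun e => h1 e.symm, h5.symm, fun e => h6 e.symm⟩)
  · exact Or.inr (Or.inr ⟨fun e => h1 e.symm, fun e => h5 e.symm, h7.symm⟩)
  · norm_num at h

lemma triple_cases (r s t : ℝ) :
    (r = s ∧ r = t) ∨ ∃ v, Multiset.count v ({r,s,t} : Multiset ℝ) = 1 := by
  by_cases h1 : r = s <;> by_cases h2 : r = t <;> by_cases h3 : s = t
  · exact Or.inl ⟨h1, h2⟩
  · exact Or.inl ⟨h1, h2⟩
  · exact absurd (h1.trans h3) h2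
  · refine Or.inr ⟨t, ?_⟩
    rw [count_explicit, if_neg (fun e => h2 e.symm), if_neg (fun e => h3 e.symm), if_pos rfl]
  · exact absurd (h2.trans h3.symm) h1
  · refine Or.inr ⟨s, ?_⟩
    rw [count_explicit, if_neg (fun e => h1 e.symm), if_pos rfl, if_neg h3]
  · refine Or.inr ⟨r, ?_⟩
    rw [count_explicit, if_pos rfl, if_neg h1, if_neg h2]
  · refine Or.inr ⟨r, ?_⟩
    rw [count_explicit, if_pos rfl, if_neg h1, if_neg h2]

lemma no_five_equidistant (q : Fin 5 → E3) (e : ℝ) (he : e ≠ 0)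
    (h : ∀ i j, i ≠ j → dist (q i) (q j) = e) : False := by
  set u : Fin 4 → E3 := fun i => q i.succ - q 0 with hu
  have hnorm : ∀ i, ‖u i‖ = e := by
    intro i
    rw [hu]
    simp only []
    rw [← dist_eq_norm]
    exact h _ _ (Fin.succ_ne_zero i)
  have hsub : ∀ i j, i ≠ j → ‖u i - u j‖ = e := by
    intro i j hij
    have : u i - u j = q i.succ - q j.succ := by
      simp only [hu]
      abel
    rw [this, ← dist_eq_norm]
    exact h _ _ (fun hh => hij (Fin.succ_injective _ hh))
  have hinner : ∀ i j, ⟪u i, u j⟫ = if i = j then e ^ 2 else e ^ 2 / 2 := by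
    intro i j
    by_cases hij : i = j
    · subst hij
      rw [if_pos rfl, real_inner_self_eq_norm_sq, hnorm]
    · rw [if_neg hij]
      have h1 := norm_sub_sq_real (u i) (u j)
      rw [hnorm, hnorm, hsub i j hij] at h1
      linarith
  have hli : LinearIndependent ℝ u := by
    rw [Fintype.linearIndependent_iff]
    intro g hg
    have key : ∀ j, g j + (g 0 + g 1 + g 2 + g 3) = 0 := by
      intro j
      have h0 : ⟪∑ i, g i • u i, u j⟫ = 0 := by rw [hg]; simp
      rw [sum_inner] at h0
      simp only [real_inner_smul_left, hinner] at h0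
      have hsplit : ∀ i : Fin 4, g i * (if i = j then e ^ 2 else e ^ 2 / 2) =
          g i * (e ^ 2 / 2) + (if i = j then g i * (e ^ 2 / 2) else 0) := by
        intro i; split_ifs <;> ring
      rw [Finset.sum_congr rfl (fun i _ => hsplit i), Finset.sum_add_distrib,
        Finset.sum_ite_eq' Finset.univ j (fun i => g i * (e ^ 2 / 2))] at h0
      simp only [Finset.mem_univ, if_pos] at h0
      rw [← Finset.sum_mul] at h0
      have he2 : e ^ 2 / 2 ≠ 0 := by positivity
      have hz : ((∑ i, g i) + g j) * (e ^ 2 / 2) = 0 := by rw [add_mul]; linarith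
      have : (∑ i, g i) + g j = 0 := by
        rcases mul_eq_zero.mp hz with h' | h'
        · exact h'
        · exact absurd h' he2
      rw [Fin.sum_univ_four] at this
      linarith
    intro j
    have k0 := key 0; have k1 := key 1; have k2 := key 2; have k3 := key 3
    have hT : g 0 + g 1 + g 2 + g 3 = 0 := by linarith
    have hj := key j
    linarith
  have hcard := hli.fintype_card_le_finrank
  rw [finrank_euclideanSpace_fin] at hcard
  norm_num at hcard
lemma bound (S : Finset E3) (hDet : DeterminesOneTriangle S) : S.card ≤ 4 := by
  by_contra hlt
  push_neg at hlt
  obtain ⟨T, hTS, hT5⟩ := Finset.exists_subset_card_eq (s := S) (n := 5) hlt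
  set f := (T.equivFinOfCardEq hT5).symm with hf
  set q : Fin 5 → E3 := fun i => ((f i : T) : E3) with hqdef
  have hq : ∀ i, q i ∈ S := fun i => hTS (f i).2
  have hqinj : ∀ i j : Fin 5, i ≠ j → q i ≠ q j := fun i j hij heq =>
    hij (f.injective (Subtype.ext heq))
  have hnc := step0 S hDet
  have hncq : ∀ i j k : Fin 5, i ≠ j → i ≠ k → j ≠ k →
      ¬ Collinear ℝ ({q i, q j, q k} : Set E3) := fun i j k hij hik hjk =>
    hnc _ (hq i) _ (hq j) _ (hq k) (hqinj _ _ hij) (hqinj _ _ hik) (hqinj _ _ hjk)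
  have htri : ∀ i j k : Fin 5, i ≠ j → i ≠ k → j ≠ k →
      ({dist (q i) (q j), dist (q i) (q k), dist (q j) (q k)} : Multiset ℝ) =
      {dist (q 0) (q 1), dist (q 0) (q 2), dist (q 1) (q 2)} := fun i j k hij hik hjk =>
    hDet.2 _ (hq i) _ (hq j) _ (hq k) (hqinj _ _ hij) (hqinj _ _ hik) (hqinj _ _ hjk)
      (hncq i j k hij hik hjk) _ (hq 0) _ (hq 1) _ (hq 2)
      (hqinj 0 1 (by decide)) (hqinj 0 2 (by decide)) (hqinj 1 2 (by decide))
      (hncq 0 1 2 (by decide) (by decide) (by decide))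
  have hthird : ∀ i j : Fin 5, ∃ k, k ≠ i ∧ k ≠ j := by decide
  rcases triple_cases (dist (q 0) (q 1)) (dist (q 0) (q 2)) (dist (q 1) (q 2)) with
    ⟨h1, h2⟩ | ⟨v, hv⟩
  · refine no_five_equidistant q (dist (q 0) (q 1))
      (ne_of_gt (dist_pos.2 (hqinj 0 1 (by decide)))) ?_
    intro i j hij
    obtain ⟨k, hki, hkj⟩ := hthird i j
    have heq := htri i j k hij hki.symm hkj.symm
    rw [← h1, ← h2] at heq
    have hmem : dist (q i) (q j) ∈
        ({dist (q i) (q j), dist (q i) (q k), dist (q j) (q k)} : Multiset ℝ) := by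
      simp
    rw [heq] at hmem
    simpa using hmem
  · refine graph5 (fun i j => dist (q i) (q j) = v) (fun i j k hij hik hjk => ?_)
    refine exactly_one_of_count (a := dist (q i) (q j)) (b := dist (q i) (q k))
      (c := dist (q j) (q k)) ?_
    rw [htri i j k hij hik hjk]
    exact hv

@[simp] lemma pt3_zero (x y z : ℝ) : pt3 x y z 0 = x := rfl
@[simp] lemma pt3_one (x y z : ℝ) : pt3 x y z 1 = y := rfl
@[simp] lemma pt3_two (x y z : ℝ) : pt3 x y z 2 = z := rfl

noncomputable instance : DecidableEq E3 := Classical.decEq _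

lemma dist_pt3 (x y z x' y' z' : ℝ) :
    dist (pt3 x y z) (pt3 x' y' z') = Real.sqrt ((x-x')^2 + (y-y')^2 + (z-z')^2) := by
  rw [EuclideanSpace.dist_eq]
  congr 1
  simp [pt3, Fin.sum_univ_three, Real.dist_eq, sq_abs]

lemma ncol_concrete (p₀ p₁ p₂ : E3) (i j : Fin 3)
    (h0i : p₁ i - p₀ i ≠ 0) (h0j : p₁ j - p₀ j = 0) (h2j : p₂ j - p₀ j ≠ 0) :
    ¬ Collinear ℝ ({p₀, p₁, p₂} : Set E3) := by
  intro hc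
  rw [collinear_iff_of_mem (Set.mem_insert p₀ _)] at hc
  obtain ⟨v, hv⟩ := hc
  obtain ⟨r1, hr1⟩ := hv p₁ (by simp)
  obtain ⟨r2, hr2⟩ := hv p₂ (by simp)
  have e1i : p₁ i - p₀ i = r1 * v i := by
    rw [hr1]; simp [PiLp.smul_apply, smul_eq_mul]
  have e1j : p₁ j - p₀ j = r1 * v j := by
    rw [hr1]; simp [PiLp.smul_apply, smul_eq_mul]
  have e2j : p₂ j - p₀ j = r2 * v j := by
    rw [hr2]; simp [PiLp.smul_apply, smul_eq_mul]
  have hr1ne : r1 ≠ 0 := fun h => h0i (by rw [e1i, h, zero_mul])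
  have hvj : v j = 0 := by
    rcases mul_eq_zero.mp (h0j ▸ e1j.symm) with h | h
    · exact absurd h hr1ne
    · exact h
  exact h2j (by rw [e2j, hvj, mul_zero])

lemma mswap12 (a b c : ℝ) : ({a,b,c} : Multiset ℝ) = {b,a,c} := by
  simp only [Multiset.insert_eq_cons]
  exact Multiset.cons_swap a b {c}

lemma mswap23 (a b c : ℝ) : ({a,b,c} : Multiset ℝ) = {a,c,b} := by
  simp only [Multiset.insert_eq_cons]
  exact congrArg (a ::ₘ ·) (Multiset.cons_swap b c 0)

section Tetra

noncomputable def t0 : E3 := pt3 0 0 0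
noncomputable def t1 : E3 := pt3 1 1 0
noncomputable def t2 : E3 := pt3 1 0 1
noncomputable def t3 : E3 := pt3 0 1 1

lemma td01 : dist t0 t1 = Real.sqrt 2 := by rw [t0, t1, dist_pt3]; norm_num
lemma td02 : dist t0 t2 = Real.sqrt 2 := by rw [t0, t2, dist_pt3]; norm_num
lemma td03 : dist t0 t3 = Real.sqrt 2 := by rw [t0, t3, dist_pt3]; norm_num
lemma td12 : dist t1 t2 = Real.sqrt 2 := by rw [t1, t2, dist_pt3]; norm_num
lemma td13 : dist t1 t3 = Real.sqrt 2 := by rw [t1, t3, dist_pt3]; norm_num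
lemma td23 : dist t2 t3 = Real.sqrt 2 := by rw [t2, t3, dist_pt3]; norm_num

lemma tne01 : t0 ≠ t1 := by
  rw [t0, t1]; exact fun h => by have := congrArg (fun v : E3 => v 0) h; norm_num at this
lemma tne02 : t0 ≠ t2 := by
  rw [t0, t2]; exact fun h => by have := congrArg (fun v : E3 => v 0) h; norm_num at this
lemma tne03 : t0 ≠ t3 := by
  rw [t0, t3]; exact fun h => by have := congrArg (fun v : E3 => v 1) h; norm_num at this
lemma tne12 : t1 ≠ t2 := by
  rw [t1, t2]; exact fun h => by have := congrArg (fun v : E3 => v 1) h; norm_num at this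
lemma tne13 : t1 ≠ t3 := by
  rw [t1, t3]; exact fun h => by have := congrArg (fun v : E3 => v 0) h; norm_num at this
lemma tne23 : t2 ≠ t3 := by
  rw [t2, t3]; exact fun h => by have := congrArg (fun v : E3 => v 0) h; norm_num at this

noncomputable def tetraS : Finset E3 := {t0, t1, t2, t3}

lemma tetra_card : tetraS.card = 4 := by
  rw [tetraS]
  rw [Finset.card_insert_of_notMem (by simp [tne01, tne02, tne03]),
    Finset.card_insert_of_notMem (by simp [tne12, tne13]),
    Finset.card_insert_of_notMem (by simp [tne23]), Finset.card_singleton]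

lemma tetra_dist : ∀ p ∈ tetraS, ∀ q ∈ tetraS, p ≠ q → dist p q = Real.sqrt 2 := by
  intro p hp q hq hne
  rw [tetraS] at hp hq
  simp only [Finset.mem_insert, Finset.mem_singleton] at hp hq
  rcases hp with rfl | rfl | rfl | rfl <;> rcases hq with rfl | rfl | rfl | rfl <;>
    first
      | exact absurd rfl hne
      | exact td01 | exact td02 | exact td03 | exact td12 | exact td13 | exact td23
      | (rw [dist_comm];
          first | exact td01 | exact td02 | exact td03 | exact td12 | exact td13 | exact td23)

lemma tetra_ncol : ¬ Collinear ℝ ({t0, t1, t2} : Set E3) := by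
  refine ncol_concrete t0 t1 t2 0 2 ?_ ?_ ?_ <;> simp only [t0, t1, t2] <;> norm_num

lemma tetra_det : DeterminesOneTriangle tetraS := by
  constructor
  · exact ⟨t0, by simp [tetraS], t1, by simp [tetraS], t2, by simp [tetraS],
      tne01, tne02, tne12, tetra_ncol⟩
  · intro a ha b hb c hc hab hac hbc _ a' ha' b' hb' c' hc' hab' hac' hbc' _
    rw [tetra_dist a ha b hb hab, tetra_dist a ha c hc hac, tetra_dist b hb c hc hbc,
      tetra_dist a' ha' b' hb' hab', tetra_dist a' ha' c' hc' hac',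
      tetra_dist b' hb' c' hc' hbc']

end Tetra

section Rect

noncomputable def r0 : E3 := pt3 0 0 0
noncomputable def r1 : E3 := pt3 1 0 0
noncomputable def r2 : E3 := pt3 1 2 0
noncomputable def r3 : E3 := pt3 0 2 0

lemma sqrt4 : Real.sqrt 4 = 2 := by
  rw [show (4:ℝ) = 2^2 by norm_num, Real.sqrt_sq (by norm_num : (0:ℝ) ≤ 2)]

lemma rd01 : dist r0 r1 = 1 := by rw [r0, r1, dist_pt3]; norm_num
lemma rd02 : dist r0 r2 = Real.sqrt 5 := by rw [r0, r2, dist_pt3]; norm_num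
lemma rd03 : dist r0 r3 = 2 := by rw [r0, r3, dist_pt3]; norm_num [sqrt4]
lemma rd12 : dist r1 r2 = 2 := by rw [r1, r2, dist_pt3]; norm_num [sqrt4]
lemma rd13 : dist r1 r3 = Real.sqrt 5 := by rw [r1, r3, dist_pt3]; norm_num
lemma rd23 : dist r2 r3 = 1 := by rw [r2, r3, dist_pt3]; norm_num

lemma rd10 : dist r1 r0 = 1 := by rw [dist_comm]; exact rd01
lemma rd20 : dist r2 r0 = Real.sqrt 5 := by rw [dist_comm]; exact rd02
lemma rd30 : dist r3 r0 = 2 := by rw [dist_comm]; exact rd03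
lemma rd21 : dist r2 r1 = 2 := by rw [dist_comm]; exact rd12
lemma rd31 : dist r3 r1 = Real.sqrt 5 := by rw [dist_comm]; exact rd13
lemma rd32 : dist r3 r2 = 1 := by rw [dist_comm]; exact rd23

lemma rne01 : r0 ≠ r1 := by
  rw [r0, r1]; exact fun h => by have := congrArg (fun v : E3 => v 0) h; norm_num at this
lemma rne02 : r0 ≠ r2 := by
  rw [r0, r2]; exact fun h => by have := congrArg (fun v : E3 => v 0) h; norm_num at this
lemma rne03 : r0 ≠ r3 := by
  rw [r0, r3]; exact fun h => by have := congrArg (fun v : E3 => v 1) h; norm_num at this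
lemma rne12 : r1 ≠ r2 := by
  rw [r1, r2]; exact fun h => by have := congrArg (fun v : E3 => v 1) h; norm_num at this
lemma rne13 : r1 ≠ r3 := by
  rw [r1, r3]; exact fun h => by have := congrArg (fun v : E3 => v 0) h; norm_num at this
lemma rne23 : r2 ≠ r3 := by
  rw [r2, r3]; exact fun h => by have := congrArg (fun v : E3 => v 0) h; norm_num at this

noncomputable def rectS : Finset E3 := {r0, r1, r2, r3}

lemma rect_card : rectS.card = 4 := by
  rw [rectS]
  rw [Finset.card_insert_of_notMem (by simp [rne01, rne02, rne03]),
    Finset.card_insert_of_notMem (by simp [rne12, rne13]),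
    Finset.card_insert_of_notMem (by simp [rne23]), Finset.card_singleton]

lemma rect_tri : ∀ a ∈ rectS, ∀ b ∈ rectS, ∀ c ∈ rectS, a ≠ b → a ≠ c → b ≠ c →
    ({dist a b, dist a c, dist b c} : Multiset ℝ) = {1, Real.sqrt 5, 2} := by
  intro a ha b hb c hc hab hac hbc
  rw [rectS] at ha hb hc
  simp only [Finset.mem_insert, Finset.mem_singleton] at ha hb hc
  rcases ha with rfl | rfl | rfl | rfl <;> rcases hb with rfl | rfl | rfl | rfl <;>
    rcases hc with rfl | rfl | rfl | rfl <;>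
    first
      | exact absurd rfl hab
      | exact absurd rfl hac
      | exact absurd rfl hbc
      | (simp only [rd01, rd02, rd03, rd12, rd13, rd23, rd10, rd20, rd30, rd21, rd31, rd32] <;>
         first
           | rfl
           | exact mswap12 _ _ _
           | exact mswap23 _ _ _
           | exact (mswap12 _ _ _).trans (mswap23 _ _ _)
           | exact (mswap23 _ _ _).trans (mswap12 _ _ _)
           | exact ((mswap12 _ _ _).trans (mswap23 _ _ _)).trans (mswap12 _ _ _))

lemma rect_ncol : ¬ Collinear ℝ ({r0, r1, r2} : Set E3) := by
  refine ncol_concrete r0 r1 r2 0 1 ?_ ?_ ?_ <;> simp only [r0, r1, r2] <;> norm_num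

lemma rect_det : DeterminesOneTriangle rectS := by
  constructor
  · exact ⟨r0, by simp [rectS], r1, by simp [rectS], r2, by simp [rectS],
      rne01, rne02, rne12, rect_ncol⟩
  · intro a ha b hb c hc hab hac hbc _ a' ha' b' hb' c' hc' hab' hac' hbc' _
    rw [rect_tri a ha b hb c hc hab hac hbc, rect_tri a' ha' b' hb' c' hc' hab' hac' hbc']

end Rect

/-- In ℝ³ the maximum size of a point set determining exactly one distinct triangle
is 4, achieved both by a regular tetrahedron and by a (non-square) rectangle. -/
theorem max_one_triangle_R3 :
    (∀ S : Finset (EuclideanSpace ℝ (Fin 3)), DeterminesOneTriangle S → S.card ≤ 4) ∧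
    (∃ S : Finset (EuclideanSpace ℝ (Fin 3)), S.card = 4 ∧ DeterminesOneTriangle S ∧
      ∃ e : ℝ, 0 < e ∧ ∀ p ∈ S, ∀ q ∈ S, p ≠ q → dist p q = e) ∧
    (∃ a b : ℝ, 0 < a ∧ 0 < b ∧ a ≠ b ∧
      ∃ S : Finset (EuclideanSpace ℝ (Fin 3)), S.card = 4 ∧
        (S : Set (EuclideanSpace ℝ (Fin 3))) =
          {pt3 0 0 0, pt3 a 0 0, pt3 a b 0, pt3 0 b 0} ∧
        DeterminesOneTriangle S) := by
  refine ⟨bound, ⟨tetraS, tetra_card, tetra_det, Real.sqrt 2,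
    Real.sqrt_pos.2 (by norm_num), tetra_dist⟩,
    ⟨1, 2, by norm_num, by norm_num, by norm_num, rectS, rect_card, ?_, rect_det⟩⟩
  rw [rectS, r0, r1, r2, r3]
  simp
end
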